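/- Let μ be any cardinal and κ an infinite cardinal. Let X be a set with |X| ≤ μ and let H be a family of subsets of X, each of cardinality at most κ, such that every point of X belongs to at least κ members of H (counted with multiplicity via an indexing). Then there is a coloring c : H → κ such that for every x ∈ X and every color γ < κ, some set H ∈ H containing x has c(H) = γ. -/

import Mathlib

open Cardinal Ordinal

universe u

theorem greedy_lemma {X ι : Type u} {κ : Cardinal.{u}} (hκ : ℵ₀ ≤ κ)
    (s : Set X) (hs : #s ≤ κ) (T : X → Set ι) (hT : ∀ x ∈ s, κ ≤ #(T x)) :
    ∃ f : ι → Ordinal, (∀ i, f i < κ.ord) ∧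
      ∀ x ∈ s, ∀ γ < κ.ord, ∃ i ∈ T x, f i = γ := by
  classical
  set K := κ.ord.ToType with hK
  haveI : IsWellOrder K ((· < ·) : K → K → Prop) := @isWellOrder_lt κ.ord.ToType _ _
  have hKcard : #K = κ := by rw [hK, mk_toType, card_ord]
  have hP : #(↥s × K) ≤ #K := by
    rw [mk_prod, Cardinal.lift_id, Cardinal.lift_id, hKcard]
    calc #↥s * κ ≤ κ * κ := by gcongr
    _ = κ := mul_eq_self hκ
  obtain ⟨e⟩ := Cardinal.le_def _ _ |>.mp hP
  set P := ↥s × K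
  set rel : P → P → Prop := fun q p => e q < e p with hrel
  have wf : WellFounded rel := InvImage.wf _ (IsWellFounded.wf)
  have step : ∀ (p : P) (g : {q // rel q p} → ι),
      ∃ i, i ∈ T (p.1 : X) ∧ i ∉ Set.range g := by
    intro p g
    by_contra hcon
    push_neg at hcon
    have h1 : κ ≤ #(T (p.1 : X)) := hT _ p.1.2
    have h2 : #(T (p.1 : X)) ≤ #(Set.range g) :=
      mk_le_mk_of_subset (fun i hi => hcon i hi)
    have h3 : #(Set.range g) ≤ #{q // rel q p} := mk_range_le
    have h4 : #{q // rel q p} ≤ #{b : K // b < e p} := by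
      refine mk_le_of_injective (f := fun q => (⟨e q.1, q.2⟩ : {b : K // b < e p})) ?_
      intro a b hab
      exact Subtype.ext (e.injective (congrArg Subtype.val hab))
    have h5 : #{b : K // b < e p} < κ := mk_Iio_ord_toType (e p)
    exact absurd ((h1.trans h2).trans (h3.trans h4)) (not_le.mpr h5)
  set f : P → ι := WellFounded.fix wf
    (fun p IH => (step p (fun q => IH q.1 q.2)).choose) with hf
  have hfeq : ∀ p, f p = (step p (fun q : {q // rel q p} => f q.1)).choose := by
    intro p
    rw [hf]
    exact WellFounded.fix_eq wf _ p
  have hmem : ∀ p, f p ∈ T (p.1 : X) := by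
    intro p
    rw [hfeq p]
    exact (step p _).choose_spec.1
  have hnew : ∀ p q, rel q p → f q ≠ f p := by
    intro p q hq hcontra
    have := (step p (fun q : {q // rel q p} => f q.1)).choose_spec.2
    rw [← hfeq p] at this
    exact this ⟨⟨q, hq⟩, hcontra⟩
  have finj : Function.Injective f := by
    intro p q h
    rcases lt_trichotomy (e p) (e q) with hlt | heq | hgt
    · exact absurd h (hnew q p hlt)
    · exact e.injective heq
    · exact absurd h.symm (hnew p q hgt)
  refine ⟨fun i => if h : ∃ p, f p = i then typein (α := K) (· < ·) h.choose.2 else 0,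
    ?_, ?_⟩
  · intro i
    beta_reduce
    by_cases h : ∃ p, f p = i
    · rw [dif_pos h]
      exact typein_lt_self _
    · rw [dif_neg h]
      rw [Cardinal.lt_ord]
      simpa using aleph0_pos.trans_le hκ
  · intro x hx γ hγ
    set k : K := (ToType.mk (o := κ.ord)) ⟨γ, hγ⟩ with hk
    set p : P := (⟨x, hx⟩, k) with hp
    refine ⟨f p, hmem p, ?_⟩
    beta_reduce
    have hex : ∃ q, f q = f p := ⟨p, rfl⟩
    rw [dif_pos hex]
    have : hex.choose = p := finj hex.choose_spec
    rw [this]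
    show typein (α := K) (· < ·) k = γ
    rw [hk]
    exact typein_enum _ _

theorem stmt_1 {X ι : Type u} (μ κ : Cardinal.{u}) (hκ : ℵ₀ ≤ κ) (hX : #X ≤ μ)
    (A : ι → Set X) (hsize : ∀ i, #(A i) ≤ κ)
    (hcov : ∀ x : X, κ ≤ #{i | x ∈ A i}) :
    ∃ c : ι → Ordinal, (∀ i, c i < κ.ord) ∧
      ∀ x : X, ∀ γ < κ.ord, ∃ i, x ∈ A i ∧ c i = γ := by
  classical
  have hz : (0 : Ordinal) < κ.ord := by
    rw [Cardinal.lt_ord]; simpa using aleph0_pos.trans_le hκ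
  choose T hTsub hTcard using fun x : X => (le_mk_iff_exists_subset.mp (hcov x))
  set r : X → X → Prop := fun x y => (T x ∩ T y).Nonempty with hr
  have hrsymm : Symmetric r := fun x y ⟨i, hi⟩ => ⟨i, hi.2, hi.1⟩
  set comp : X → Set X := fun x => {y | Relation.ReflTransGen r x y} with hcomp
  have hcompself : ∀ x, x ∈ comp x := fun x => Relation.ReflTransGen.refl
  have hcompeq : ∀ x y, y ∈ comp x → comp x = comp y := by
    intro x y hy
    have hy' : Relation.ReflTransGen r x y := hy
    ext z
    constructor
    · intro hz'
      exact ((@Std.Symm.symm _ _ (@Relation.ReflTransGen.stdSymm _ r ⟨hrsymm⟩)) _ _ hy').trans hz'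
    · intro hz'
      exact hy'.trans hz'
  have hnb : ∀ x, #{y | r x y} ≤ κ := by
    intro x
    have hsub2 : {y | r x y} ⊆ ⋃ i ∈ T x, A i := by
      rintro y ⟨i, hix, hiy⟩
      exact Set.mem_biUnion hix (hTsub y hiy)
    calc #{y | r x y} ≤ #(⋃ i ∈ T x, A i) := mk_le_mk_of_subset hsub2
      _ ≤ #(T x) * ⨆ i : T x, #(A i) := mk_biUnion_le _ _
      _ ≤ κ * κ := mul_le_mul' (hTcard x).le (ciSup_le' fun i => hsize i)
      _ = κ := mul_eq_self hκ
  set g : Set X → Set X := fun u => ⋃ y ∈ u, {z | r y z} with hg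
  have hgcard : ∀ u : Set X, #u ≤ κ → #(g u) ≤ κ := by
    intro u hu
    calc #(g u) ≤ #u * ⨆ y : u, #{z | r y z} := mk_biUnion_le _ _
      _ ≤ κ * κ := mul_le_mul' hu (ciSup_le' fun y => hnb y)
      _ = κ := mul_eq_self hκ
  have hiter : ∀ (x : X) (n : ℕ), #(g^[n] {x}) ≤ κ := by
    intro x n
    induction n with
    | zero =>
        rw [Function.iterate_zero_apply, mk_singleton]
        exact one_le_aleph0.trans hκ
    | succ n ih =>
        rw [Function.iterate_succ_apply']
        exact hgcard _ ih
  have hcompsub : ∀ x, comp x ⊆ ⋃ n : ℕ, g^[n] {x} := by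
    intro x y hy
    have hy' : Relation.ReflTransGen r x y := hy
    clear hy
    induction hy' with
    | refl => exact Set.mem_iUnion.mpr ⟨0, by simp⟩
    | tail hab hbc ih =>
        obtain ⟨n, hn⟩ := Set.mem_iUnion.mp ih
        refine Set.mem_iUnion.mpr ⟨n + 1, ?_⟩
        rw [Function.iterate_succ_apply']
        exact Set.mem_biUnion hn hbc
  have hcompcard : ∀ x, #(comp x) ≤ κ := by
    intro x
    refine (mk_le_mk_of_subset (hcompsub x)).trans ?_
    have h1 := mk_iUnion_le_lift (f := fun n : ℕ => g^[n] ({x} : Set X))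
    rw [Cardinal.lift_uzero, Cardinal.mk_nat, Cardinal.lift_aleph0] at h1
    simp_rw [Cardinal.lift_uzero] at h1
    refine h1.trans ?_
    calc ℵ₀ * ⨆ n : ℕ, #(g^[n] ({x} : Set X)) ≤ ℵ₀ * κ :=
          mul_le_mul' le_rfl (ciSup_le' fun n => hiter x n)
      _ = κ := aleph0_mul_eq hκ
  have key : ∀ u : Set X, ∃ f : ι → Ordinal, (∀ i, f i < κ.ord) ∧
      (#u ≤ κ → ∀ x ∈ u, ∀ γ < κ.ord, ∃ i ∈ T x, f i = γ) := by
    intro u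
    by_cases hu : #u ≤ κ
    · obtain ⟨f, h1, h2⟩ := greedy_lemma hκ u hu T (fun x _ => (hTcard x).ge)
      exact ⟨f, h1, fun _ => h2⟩
    · exact ⟨fun _ => 0, fun i => hz, fun h => absurd h hu⟩
  choose F hF1 hF2 using key
  refine ⟨fun i => if h : ∃ x, i ∈ T x then F (comp h.choose) i else 0, ?_, ?_⟩
  · intro i
    beta_reduce
    by_cases h : ∃ x, i ∈ T x
    · rw [dif_pos h]; exact hF1 _ i
    · rw [dif_neg h]; exact hz
  · intro x γ hγ
    obtain ⟨i, hiT, hie⟩ := hF2 (comp x) (hcompcard x) x (hcompself x) γ hγ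
    refine ⟨i, hTsub x hiT, ?_⟩
    beta_reduce
    have h : ∃ y, i ∈ T y := ⟨x, hiT⟩
    rw [dif_pos h]
    have hrel : r x h.choose := ⟨i, hiT, h.choose_spec⟩
    have heq : comp x = comp h.choose :=
      hcompeq x h.choose (Relation.ReflTransGen.single hrel)
    rw [← heq]
    exact hie
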